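/- With the same setup as for NNCE, the partial derivative of NNCE(p, y) with respect to p_y equals −(1/p_y) · (Σ_{k ≠ y} (A + log p_k)) / (Σ_{k=1}^K (A + log p_k))², which is strictly negative when K ≥ 2. -/

import Mathlib

open Finset

theorem nnce_deriv_label {K : ℕ} (hK : 2 ≤ K) (p : Fin K → ℝ)
    (hp : ∀ k, 0 < p k ∧ p k < 1)
    (A : ℝ) (hA : ∀ k, 0 < A + Real.log (p k)) (y : Fin K) :
    HasDerivAt (fun t : ℝ => 1 - (A + Real.log (Function.update p y t y)) /
        ∑ k : Fin K, (A + Real.log (Function.update p y t k)))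
      (-((1 / p y) * (∑ k ∈ Finset.univ.erase y, (A + Real.log (p k))) /
          (∑ k : Fin K, (A + Real.log (p k))) ^ 2)) (p y)
    ∧ (-((1 / p y) * (∑ k ∈ Finset.univ.erase y, (A + Real.log (p k))) /
          (∑ k : Fin K, (A + Real.log (p k))) ^ 2)) < 0 := by
  have hpy : 0 < p y := (hp y).1
  set S' : ℝ := ∑ k ∈ Finset.univ.erase y, (A + Real.log (p k)) with hS'
  have hfun : (fun t : ℝ => 1 - (A + Real.log (Function.update p y t y)) /
        ∑ k : Fin K, (A + Real.log (Function.update p y t k)))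
      = fun t : ℝ => 1 - (A + Real.log t) / ((A + Real.log t) + S') := by
    funext t
    have h1 : Function.update p y t y = t := Function.update_self y t p
    have h2 : ∑ k : Fin K, (A + Real.log (Function.update p y t k))
        = (A + Real.log t) + S' := by
      rw [← Finset.add_sum_erase _ _ (Finset.mem_univ y), h1]
      congr 1
      exact Finset.sum_congr rfl fun k hk => by
        rw [Function.update_of_ne (Finset.ne_of_mem_erase hk)]
    rw [h1, h2]
  have hsum : ∑ k : Fin K, (A + Real.log (p k)) = (A + Real.log (p y)) + S' := by
    rw [← Finset.add_sum_erase _ _ (Finset.mem_univ y)]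
  have hsum_pos : 0 < ∑ k : Fin K, (A + Real.log (p k)) :=
    Finset.sum_pos (fun k _ => hA k) ⟨y, Finset.mem_univ y⟩
  have hS'pos : 0 < S' := by
    have : Nontrivial (Fin K) := Fin.nontrivial_iff_two_le.mpr hK
    obtain ⟨z, hz⟩ := exists_ne y
    exact Finset.sum_pos (fun k _ => hA k)
      ⟨z, Finset.mem_erase.mpr ⟨hz, Finset.mem_univ z⟩⟩
  have hden : (A + Real.log (p y)) + S' ≠ 0 := by rw [← hsum]; exact hsum_pos.ne'
  have hf : HasDerivAt (fun t : ℝ => A + Real.log t) (p y)⁻¹ (p y) :=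
    (Real.hasDerivAt_log hpy.ne').const_add A
  have hg : HasDerivAt (fun t : ℝ => (A + Real.log t) + S') (p y)⁻¹ (p y) :=
    hf.add_const S'
  have hdiv := (hf.div hg hden).const_sub 1
  have heq : -(((p y)⁻¹ * ((A + Real.log (p y)) + S') -
        (A + Real.log (p y)) * (p y)⁻¹) / ((A + Real.log (p y)) + S') ^ 2)
      = -((1 / p y) * S' / (∑ k : Fin K, (A + Real.log (p k))) ^ 2) := by
    rw [hsum]; field_simp; ring
  constructor
  · rw [hfun]
    exact heq ▸ hdiv
  · exact neg_neg_iff_pos.mpr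
      (div_pos (mul_pos (by positivity) hS'pos) (by positivity))
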